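/- Let q be a prime power, l ≥ 1, t = q^l, and F = GF(t²) (so GF(q) ⊆ GF(t) ⊆ F). Let L₃ = {α ∈ F : α^t + α + 1 ≠ 0} (note 0 ∈ L₃), let L₃* = L₃ \ {0}, and let L₄* = {α ∈ F : α ≠ 0 and α^t + α^{t−1} + 1 ≠ 0}. Then the map α ↦ α^{−1} is a bijection from L₃* onto L₄*, and for every integer i with 1 ≤ i ≤ q and every c : L₃* → GF(q), the vector c' : L₄* → GF(q) defined by c'(α^{−1}) = c(α) belongs to Γ(L₄*, (X^t + X^{t−1} + 1)^i) if and only if there exists c₀ ∈ GF(q) such that the extension of c to L₃ taking the value c₀ at 0 belongs to Γ(L₃, (X^t + X + 1)^i). In other words, Γ(L₄*, (X^t + X^{t−1} + 1)^i) is, up to the permutation α ↦ α^{−1}, the code obtained from Γ(L₃, (X^t + X + 1)^i) by shortening in the redundancy symbol at the position 0. -/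

import Mathlib

open Polynomial

/-- The syndrome polynomial `Σ_{a ∈ s} c(a) ∏_{b ∈ s, b ≠ a} (X − b)` of a word
`c : s → GF(q)` (given as a function on `F`) with respect to the locator set `s ⊆ F`. -/
noncomputable def goppaSumS {K F : Type*} [Field K] [Field F] [Algebra K F] [DecidableEq F]
    (s : Finset F) (c : F → K) : Polynomial F :=
  ∑ a ∈ s, Polynomial.C (algebraMap K F (c a)) *
    ∏ b ∈ s.erase a, (Polynomial.X - Polynomial.C b)




noncomputable def gpQuot {F : Type*} [Field F] (p : F[X]) (a : F) : F[X] :=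
  ∑ s ∈ Finset.range (p.natDegree + 1), Polynomial.C (p.coeff s) *
    ∑ m ∈ Finset.range s, Polynomial.X ^ m * Polynomial.C a ^ (s - 1 - m)

lemma gpQuot_mul {F : Type*} [Field F] (p : F[X]) (a : F) :
    gpQuot p a * (X - C a) = p - C (p.eval a) := by
  rw [gpQuot, Finset.sum_mul]
  have h1 : ∀ s ∈ Finset.range (p.natDegree + 1),
      C (p.coeff s) * (∑ m ∈ Finset.range s, (X:F[X]) ^ m * C a ^ (s - 1 - m)) * (X - C a)
      = C (p.coeff s) * X ^ s - C (p.coeff s) * C a ^ s := by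
    intro s _
    rw [mul_assoc, geom_sum₂_mul, mul_sub]
  rw [Finset.sum_congr rfl h1, Finset.sum_sub_distrib]
  congr 1
  · exact (p.as_sum_range_C_mul_X_pow).symm
  · rw [eval_eq_sum_range, map_sum]
    congr 1; ext s; rw [map_mul, map_pow]

lemma gpQuot_coeff {F : Type*} [Field F] (p : F[X]) (a : F) (j : ℕ) :
    (gpQuot p a).coeff j = ∑ s ∈ Finset.range (p.natDegree + 1),
      if j < s then p.coeff s * a ^ (s - 1 - j) else 0 := by
  rw [gpQuot, finset_sum_coeff]
  refine Finset.sum_congr rfl fun s _ => ?_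
  rw [coeff_C_mul, finset_sum_coeff]
  have : ∀ m ∈ Finset.range s, ((X:F[X]) ^ m * C a ^ (s-1-m)).coeff j
      = if m = j then a ^ (s-1-m) else 0 := by
    intro m _
    rw [← map_pow, mul_comm, coeff_C_mul, coeff_X_pow]
    split
    · next h => rw [if_pos h.symm, mul_one]
    · next h => rw [if_neg (fun hh => h hh.symm), mul_zero]
  rw [Finset.sum_congr rfl this, Finset.sum_ite_eq' (Finset.range s) j]
  by_cases h : j < s
  · rw [if_pos h, if_pos (Finset.mem_range.mpr h)]
  · rw [if_neg h, if_neg (fun hh => h (Finset.mem_range.mp hh)), mul_zero]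

lemma gpQuot_natDegree_le {F : Type*} [Field F] (p : F[X]) (a : F) :
    (gpQuot p a).natDegree ≤ p.natDegree - 1 := by
  refine Polynomial.natDegree_sum_le_of_forall_le _ _ fun s hs => ?_
  refine le_trans (natDegree_mul_le) ?_
  rw [natDegree_C, zero_add]
  refine Polynomial.natDegree_sum_le_of_forall_le _ _ fun m hm => ?_
  refine le_trans (natDegree_mul_le) ?_
  have h1 : ((X:F[X])^m).natDegree ≤ m := natDegree_X_pow_le m
  have h2 : ((C a:F[X])^(s-1-m)).natDegree = 0 := by
    rw [← map_pow, natDegree_C]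
  rw [h2]
  have := Finset.mem_range.mp hm
  have := Finset.mem_range.mp hs
  omega



lemma G3_monic {F : Type*} [Field F] (t : ℕ) (ht : 2 ≤ t) :
    (X ^ t + X + 1 : F[X]).Monic := by
  have h : (X ^ t + X + 1 : F[X]) = X ^ t + (X + 1) := by ring
  rw [h]
  apply monic_X_pow_add
  calc degree (X + 1 : F[X]) = degree (X + C 1 : F[X]) := by rw [map_one]
    _ = 1 := degree_X_add_C 1
    _ < (t : WithBot ℕ) := by exact_mod_cast (by omega : 1 < t)

lemma G3_natDegree {F : Type*} [Field F] (t : ℕ) (ht : 2 ≤ t) :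
    (X ^ t + X + 1 : F[X]).natDegree = t := by
  have h : (X ^ t + X + 1 : F[X]) = X ^ t + (X + 1) := by ring
  rw [h]
  have hd : degree (X + 1 : F[X]) < degree (X ^ t : F[X]) := by
    rw [degree_X_pow]
    calc degree (X + 1 : F[X]) = degree (X + C 1 : F[X]) := by rw [map_one]
      _ = 1 := degree_X_add_C 1
      _ < (t : WithBot ℕ) := by exact_mod_cast (by omega : 1 < t)
  have h2 : degree (X ^ t + (X + 1) : F[X]) = t := by
    rw [degree_add_eq_left_of_degree_lt hd, degree_X_pow]
  exact natDegree_eq_of_degree_eq_some h2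

lemma sumZero {K F : Type*} [Field K] [Field F] [Algebra K F] [DecidableEq F]
    (p m t i : ℕ) [Fact p.Prime] [CharP F p] (htp : t = p ^ m)
    (ht : 2 ≤ t) (hi : 1 ≤ i) (L : Finset F) (cw : F → K)
    (hK : ∀ x : K, (algebraMap K F x) ^ t = algebraMap K F x)
    (hg : ∀ a ∈ L, (a ^ t + a + 1) ^ t = a ^ t + a + 1)
    (hL : ∀ a ∈ L, a ^ t + a + 1 ≠ 0)
    (hdvd : (X ^ t + X + 1 : F[X]) ^ i ∣ goppaSumS L cw) :
    ∑ a ∈ L, algebraMap K F (cw a) = 0 := by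
  set G : F[X] := X ^ t + X + 1 with hG
  have hGm : G.Monic := G3_monic t ht
  set N := t * i with hN
  have hGideg : (G ^ i).natDegree = N := by
    rw [hGm.natDegree_pow, G3_natDegree t ht, mul_comm]
  have hGiM : (G ^ i).Monic := hGm.pow i
  set gi : F → F := fun a => (a ^ t + a + 1) ^ i with hgi
  have hgieval : ∀ a : F, eval a (G ^ i) = gi a := by
    intro a; simp [hG, hgi]
  have hgine : ∀ a ∈ L, gi a ≠ 0 := fun a ha => pow_ne_zero _ (hL a ha)
  set v : F → F := fun a => algebraMap K F (cw a) * (gi a)⁻¹ with hvdef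
  have hv : ∀ a ∈ L, v a * gi a = algebraMap K F (cw a) := by
    intro a ha
    rw [hvdef]
    simp only []
    rw [mul_assoc, inv_mul_cancel₀ (hgine a ha), mul_one]
  set D : F[X] := ∑ a ∈ L, C (v a) * gpQuot (G ^ i) a with hD
  set W : F[X] := ∑ a ∈ L, C (v a) * ∏ b ∈ L.erase a, (X - C b) with hW
  set P : F[X] := ∏ b ∈ L, (X - C b) with hP
  have identity : goppaSumS L cw = (G ^ i) * W - P * D := by
    rw [goppaSumS, hW, hD, Finset.mul_sum, Finset.mul_sum, ← Finset.sum_sub_distrib]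
    refine Finset.sum_congr rfl fun a ha => ?_
    have hPa : P = (X - C a) * ∏ b ∈ L.erase a, (X - C b) :=
      (Finset.mul_prod_erase L _ ha).symm
    have hq := gpQuot_mul (G ^ i) a
    rw [hgieval] at hq
    rw [← hv a ha, hPa, map_mul]
    linear_combination (C (v a) * ∏ b ∈ L.erase a, (X - C b)) * hq
  have hcop : IsCoprime (G ^ i) P := by
    refine IsCoprime.pow_left ?_
    rw [hP]
    refine IsCoprime.prod_right fun a ha => ?_
    refine ((Polynomial.irreducible_X_sub_C a).coprime_iff_not_dvd.mpr ?_).symm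
    intro hd
    exact hL a ha (by simpa [hG, IsRoot] using (Polynomial.dvd_iff_isRoot).mp hd)
  have hPD : (G ^ i) ∣ P * D := by
    have h2 : P * D = G ^ i * W - goppaSumS L cw := by rw [identity]; ring
    rw [h2]
    exact dvd_sub (dvd_mul_right _ _) hdvd
  have hDdvd : (G ^ i) ∣ D := hcop.dvd_of_dvd_mul_left hPD
  have hD0 : D = 0 := by
    refine Polynomial.eq_zero_of_dvd_of_natDegree_lt hDdvd ?_
    rw [hGideg]
    have hb : D.natDegree ≤ N - 1 := by
      refine Polynomial.natDegree_sum_le_of_forall_le _ _ fun a _ => ?_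
      refine le_trans (natDegree_mul_le) ?_
      rw [natDegree_C, zero_add]
      exact le_trans (gpQuot_natDegree_le _ _) (by rw [hGideg])
    have : 2 ≤ N := le_trans ht (Nat.le_mul_of_pos_right t hi)
    omega
  set u : ℕ → F := fun s => (G ^ i).coeff s with hu
  set μ : ℕ → F := fun mm => ∑ a ∈ L, v a * a ^ mm with hμ
  have hcoeff : ∀ j : ℕ,
      (∑ s ∈ Finset.range (N + 1), if j < s then u s * μ (s - 1 - j) else 0) = 0 := by
    intro j
    have h0 : D.coeff j = 0 := by rw [hD0]; simp
    rw [hD, finset_sum_coeff] at h0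
    have hterm : ∀ a ∈ L, (C (v a) * gpQuot (G ^ i) a).coeff j
        = ∑ s ∈ Finset.range (N + 1), if j < s then v a * (u s * a ^ (s - 1 - j)) else 0 := by
      intro a _
      rw [coeff_C_mul, gpQuot_coeff, hGideg, Finset.mul_sum]
      exact Finset.sum_congr rfl fun s _ => by rw [mul_ite, mul_zero]
    rw [Finset.sum_congr rfl hterm, Finset.sum_comm] at h0
    have h1 : ∀ s ∈ Finset.range (N + 1), (if j < s then u s * μ (s - 1 - j) else 0)
        = ∑ a ∈ L, (if j < s then v a * (u s * a ^ (s - 1 - j)) else 0) := by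
      intro s _
      by_cases hj : j < s
      · simp only [if_pos hj, hμ]
        rw [Finset.mul_sum]
        exact Finset.sum_congr rfl fun a _ => by ring
      · simp only [if_neg hj]
        exact Finset.sum_const_zero.symm
    rw [Finset.sum_congr rfl h1]
    exact h0
  have hmu : ∀ mm, mm < N → μ mm = 0 := by
    intro mm
    induction mm using Nat.strong_induction_on with
    | _ mm IH =>
      intro hmm
      have hj := hcoeff (N - 1 - mm)
      rw [Finset.sum_range_succ] at hj
      have hcond : N - 1 - mm < N := by omega
      rw [if_pos hcond] at hj
      have huN : u N = 1 := by
        rw [hu]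
        simp only []
        rw [← hGideg]
        exact hGiM.coeff_natDegree
      have he : N - 1 - (N - 1 - mm) = mm := by omega
      have hz : ∀ s ∈ Finset.range N,
          (if N - 1 - mm < s then u s * μ (s - 1 - (N - 1 - mm)) else 0) = 0 := by
        intro s hs
        have hsN := Finset.mem_range.mp hs
        by_cases hcs : N - 1 - mm < s
        · rw [if_pos hcs, IH (s - 1 - (N - 1 - mm)) (by omega) (by omega), mul_zero]
        · rw [if_neg hcs]
      rw [Finset.sum_congr rfl hz, Finset.sum_const_zero, zero_add, huN, he, one_mul] at hj
      exact hj
  have h3 : ∑ a ∈ L, algebraMap K F (cw a) = μ N := by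
    have hterm : ∀ a ∈ L, algebraMap K F (cw a)
        = ∑ s ∈ Finset.range (N + 1), u s * (v a * a ^ s) := by
      intro a ha
      rw [← hv a ha, ← hgieval a, eval_eq_sum_range, hGideg, Finset.mul_sum]
      exact Finset.sum_congr rfl fun s _ => by ring
    rw [Finset.sum_congr rfl hterm, Finset.sum_comm]
    have h5 : ∀ s ∈ Finset.range (N + 1), (∑ a ∈ L, u s * (v a * a ^ s)) = u s * μ s := by
      intro s _
      rw [hμ]
      simp only []
      rw [Finset.mul_sum]
    rw [Finset.sum_congr rfl h5, Finset.sum_range_succ]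
    have h6 : ∀ s ∈ Finset.range N, u s * μ s = 0 := by
      intro s hs
      rw [hmu s (Finset.mem_range.mp hs), mul_zero]
    rw [Finset.sum_congr rfl h6, Finset.sum_const_zero, zero_add]
    have hUN : u N = 1 := by
      rw [hu]
      simp only []
      rw [← hGideg]
      exact hGiM.coeff_natDegree
    rw [hUN, one_mul]
  have h4 : μ N = (μ i) ^ t := by
    have hterm : ∀ a ∈ L, v a * a ^ N = (v a * a ^ i) ^ t := by
      intro a ha
      have hgit : (gi a) ^ t = gi a := by
        rw [hgi]
        simp only []
        rw [← pow_mul, mul_comm i t, pow_mul, hg a ha]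
      have hvt : (v a) ^ t = v a := by
        rw [hvdef]
        simp only []
        rw [mul_pow, hK, inv_pow, hgit]
      rw [mul_pow, hvt, ← pow_mul, mul_comm i t]
    rw [hμ]
    simp only []
    calc (∑ a ∈ L, v a * a ^ N) = ∑ a ∈ L, (v a * a ^ i) ^ t :=
          Finset.sum_congr rfl hterm
      _ = (∑ a ∈ L, v a * a ^ i) ^ t := by rw [htp, ← sum_pow_char_pow]
  have h5 : μ i = 0 := by
    refine hmu i ?_
    have := Nat.mul_le_mul_right i ht
    omega
  rw [h3, h4, h5]
  exact zero_pow (by omega)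



lemma reflect_sum' {F : Type*} [Field F] {ι : Type*} (s : Finset ι) (f : ι → F[X]) (N : ℕ) :
    reflect N (∑ a ∈ s, f a) = ∑ a ∈ s, reflect N (f a) := by
  classical
  induction s using Finset.induction_on with
  | empty => simp [reflect_zero]
  | insert _ _ h ih => rw [Finset.sum_insert h, Finset.sum_insert h, reflect_add, ih]

lemma reflect_reflect' {F : Type*} [Field F] (N : ℕ) (p : F[X]) :
    reflect N (reflect N p) = p := by
  ext j
  rw [coeff_reflect, coeff_reflect, revAt_invol]

lemma natDegree_reflect_le {F : Type*} [Field F] {N : ℕ} {p : F[X]} (h : p.natDegree ≤ N) :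
    (reflect N p).natDegree ≤ N := by
  refine natDegree_le_iff_coeff_eq_zero.mpr fun j hj => ?_
  rw [coeff_reflect, revAt_eq_self_of_lt hj]
  exact coeff_eq_zero_of_natDegree_lt (lt_of_le_of_lt h hj)

lemma reflect_pow' {F : Type*} [Field F] (d : ℕ) (p : F[X]) (hp : p.natDegree ≤ d) (i : ℕ) :
    reflect (d * i) (p ^ i) = (reflect d p) ^ i := by
  induction i with
  | zero =>
    simp only [Nat.mul_zero, pow_zero]
    rw [show (1 : F[X]) = X ^ 0 by rw [pow_zero], reflect_monomial]
    simp [revAt_le]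
  | succ n ih =>
    have hb : (p ^ n).natDegree ≤ d * n := by
      refine le_trans (natDegree_pow_le) ?_
      calc n * p.natDegree ≤ n * d := Nat.mul_le_mul_left n hp
        _ = d * n := mul_comm n d
    rw [Nat.mul_succ, pow_succ, pow_succ, ← ih, ← reflect_mul _ _ hb hp]

lemma reflect_G3 {F : Type*} [Field F] (t : ℕ) (ht : 2 ≤ t) :
    reflect t (X ^ t + X + 1 : F[X]) = X ^ t + X ^ (t - 1) + 1 := by
  have h : (X ^ t + X + 1 : F[X]) = X ^ t + X ^ 1 + X ^ 0 := by
    rw [pow_one, pow_zero]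
  rw [h, reflect_add, reflect_add,
    reflect_monomial, reflect_monomial, reflect_monomial,
    revAt_le (by omega : 1 ≤ t), revAt_le (le_refl t), revAt_le (Nat.zero_le t),
    Nat.sub_zero, Nat.sub_self]
  ring

lemma reflect_G4 {F : Type*} [Field F] (t : ℕ) (ht : 2 ≤ t) :
    reflect t (X ^ t + X ^ (t - 1) + 1 : F[X]) = X ^ t + X + 1 := by
  have h : (X ^ t + X ^ (t - 1) + 1 : F[X]) = X ^ t + X ^ (t - 1) + X ^ 0 := by
    rw [pow_zero]
  have h1 : t - (t - 1) = 1 := by omega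
  rw [h, reflect_add, reflect_add,
    reflect_monomial, reflect_monomial, reflect_monomial,
    revAt_le (by omega : t - 1 ≤ t), revAt_le (le_refl t), revAt_le (Nat.zero_le t),
    Nat.sub_zero, Nat.sub_self, h1]
  ring

lemma G4_monic {F : Type*} [Field F] (t : ℕ) (ht : 2 ≤ t) :
    (X ^ t + X ^ (t - 1) + 1 : F[X]).Monic := by
  have h : (X ^ t + X ^ (t - 1) + 1 : F[X]) = X ^ t + (X ^ (t - 1) + 1) := by ring
  rw [h]
  apply monic_X_pow_add
  calc degree (X ^ (t - 1) + 1 : F[X]) = degree (X ^ (t - 1) + C 1 : F[X]) := by rw [map_one]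
    _ = ((t - 1 : ℕ) : WithBot ℕ) := degree_X_pow_add_C (by omega) 1
    _ < ((t : ℕ) : WithBot ℕ) := by exact_mod_cast (by omega : t - 1 < t)

lemma G4_natDegree {F : Type*} [Field F] (t : ℕ) (ht : 2 ≤ t) :
    (X ^ t + X ^ (t - 1) + 1 : F[X]).natDegree = t := by
  have h : (X ^ t + X ^ (t - 1) + 1 : F[X]) = X ^ t + (X ^ (t - 1) + 1) := by ring
  rw [h]
  have hd : degree (X ^ (t - 1) + 1 : F[X]) < degree (X ^ t : F[X]) := by
    rw [degree_X_pow]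
    calc degree (X ^ (t - 1) + 1 : F[X]) = degree (X ^ (t - 1) + C 1 : F[X]) := by rw [map_one]
      _ = ((t - 1 : ℕ) : WithBot ℕ) := degree_X_pow_add_C (by omega) 1
      _ < ((t : ℕ) : WithBot ℕ) := by exact_mod_cast (by omega : t - 1 < t)
  have h2 : degree (X ^ t + (X ^ (t - 1) + 1) : F[X]) = t := by
    rw [degree_add_eq_left_of_degree_lt hd, degree_X_pow]
  exact natDegree_eq_of_degree_eq_some h2

lemma mirror_dvd_iff {F : Type*} [Field F] (t i M : ℕ) (ht : 2 ≤ t) (Q : F[X])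
    (hQ : Q.natDegree ≤ M) :
    ((X ^ t + X ^ (t - 1) + 1 : F[X]) ^ i ∣ reflect M Q) ↔
      ((X ^ t + X + 1 : F[X]) ^ i ∣ Q) := by
  set G3 : F[X] := X ^ t + X + 1 with hG3
  set G4 : F[X] := X ^ t + X ^ (t - 1) + 1 with hG4
  have hG3deg : (G3 ^ i).natDegree = t * i := by
    rw [(G3_monic t ht).natDegree_pow, G3_natDegree t ht, mul_comm]
  have hG4deg : (G4 ^ i).natDegree = t * i := by
    rw [(G4_monic t ht).natDegree_pow, G4_natDegree t ht, mul_comm]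
  have hrefl34 : reflect (t * i) (G3 ^ i) = G4 ^ i := by
    rw [reflect_pow' t G3 (le_of_eq (G3_natDegree t ht)) i, reflect_G3 t ht]
  have hrefl43 : reflect (t * i) (G4 ^ i) = G3 ^ i := by
    rw [reflect_pow' t G4 (le_of_eq (G4_natDegree t ht)) i, reflect_G4 t ht]
  constructor
  · rintro ⟨V, hV⟩
    rcases eq_or_ne Q 0 with h0 | h0
    · rw [h0]; exact dvd_zero _
    rcases eq_or_ne V 0 with hV0 | hV0
    · exfalso
      apply h0
      rw [← reflect_reflect' M Q, hV, hV0, mul_zero, reflect_zero]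
    have hdeg : (G4 ^ i * V).natDegree = t * i + V.natDegree := by
      rw [natDegree_mul (((G4_monic t ht).pow i).ne_zero) hV0, hG4deg]
    have hle : t * i + V.natDegree ≤ M := by
      have h1 := natDegree_reflect_le hQ
      rw [hV, hdeg] at h1
      exact h1
    obtain ⟨M', rfl⟩ : ∃ M', M = t * i + M' := ⟨M - t * i, by omega⟩
    have hVdeg : V.natDegree ≤ M' := by omega
    refine ⟨reflect M' V, ?_⟩
    conv_lhs => rw [← reflect_reflect' (t * i + M') Q, hV]
    rw [reflect_mul _ _ (le_of_eq hG4deg) hVdeg, hrefl43]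
  · rintro ⟨V, hV⟩
    rcases eq_or_ne V 0 with hV0 | hV0
    · rw [hV, hV0, mul_zero, reflect_zero]; exact dvd_zero _
    have hdeg : Q.natDegree = t * i + V.natDegree := by
      rw [hV, natDegree_mul (((G3_monic t ht).pow i).ne_zero) hV0, hG3deg]
    have hle : t * i + V.natDegree ≤ M := by omega
    obtain ⟨M', rfl⟩ : ∃ M', M = t * i + M' := ⟨M - t * i, by omega⟩
    have hVdeg : V.natDegree ≤ M' := by omega
    refine ⟨reflect M' V, ?_⟩
    rw [hV, reflect_mul _ _ (le_of_eq hG3deg) hVdeg, hrefl34]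



lemma lin_inv {F : Type*} [Field F] (b : F) (hb : b ≠ 0) :
    (X - C b⁻¹ : F[X]) = C (-b⁻¹) * (1 - C b * X) := by
  have h1 : (C b⁻¹ * C b : F[X]) = 1 := by rw [← map_mul, inv_mul_cancel₀ hb, map_one]
  rw [map_neg]
  linear_combination (-(X : F[X])) * h1

lemma reflect_one_linear {F : Type*} [Field F] (a : F) :
    reflect 1 (X - C a) = 1 - C a * X := by
  have h : (X - C a : F[X]) = X ^ 1 - C a * X ^ 0 := by rw [pow_one, pow_zero, mul_one]
  rw [h, reflect_sub, reflect_monomial, reflect_C_mul_X_pow,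
    revAt_le (le_refl 1), revAt_le (Nat.zero_le 1), Nat.sub_self, Nat.sub_zero, pow_zero, pow_one]

lemma prod_natDegree_eq {F : Type*} [Field F] [DecidableEq F] (E : Finset F) :
    (∏ b ∈ E, (X - C b : F[X])).natDegree = E.card := by
  rw [natDegree_prod_of_monic E _ (fun b _ => monic_X_sub_C b)]
  simp [natDegree_X_sub_C]

lemma prod_reflect {F : Type*} [Field F] [DecidableEq F] (E : Finset F) :
    reflect E.card (∏ b ∈ E, (X - C b : F[X])) = ∏ b ∈ E, (1 - C b * X) := by
  induction E using Finset.induction_on with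
  | empty =>
    simp only [Finset.card_empty, Finset.prod_empty]
    rw [show (1 : F[X]) = X ^ 0 by rw [pow_zero], reflect_monomial]
    simp
  | @insert a E h ih =>
    rw [Finset.prod_insert h, Finset.prod_insert h, Finset.card_insert_of_notMem h,
      show E.card + 1 = 1 + E.card from add_comm _ _,
      reflect_mul _ _ (le_of_eq (natDegree_X_sub_C a)) (le_of_eq (prod_natDegree_eq E)),
      ih, reflect_one_linear]

lemma sum4_eq {F : Type*} [Field F] [DecidableEq F] (S : Finset F)
    (hS : ∀ b ∈ S, b ≠ 0) (w : F → F) :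
    ∑ a ∈ S, C (w a) * ∏ b ∈ S.erase a, (X - C b⁻¹)
    = C (-∏ b ∈ S, (-b⁻¹)) *
      reflect (S.card - 1) (∑ a ∈ S, C (w a * a) * ∏ b ∈ S.erase a, (X - C b)) := by
  rw [reflect_sum', Finset.mul_sum]
  refine Finset.sum_congr rfl fun a ha => ?_
  have hb : ∀ b ∈ S.erase a, b ≠ 0 := fun b hb' => hS b (Finset.mem_of_mem_erase hb')
  have hcard : (S.erase a).card = S.card - 1 := Finset.card_erase_of_mem ha
  have hprod : ∏ b ∈ S.erase a, (X - C b⁻¹)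
      = C (∏ b ∈ S.erase a, (-b⁻¹)) * reflect (S.card - 1) (∏ b ∈ S.erase a, (X - C b)) := by
    rw [← hcard, prod_reflect]
    calc ∏ b ∈ S.erase a, (X - C b⁻¹)
        = ∏ b ∈ S.erase a, (C (-b⁻¹) * (1 - C b * X)) :=
          Finset.prod_congr rfl fun b hbb => lin_inv b (hb b hbb)
      _ = (∏ b ∈ S.erase a, C (-b⁻¹)) * ∏ b ∈ S.erase a, (1 - C b * X) :=
          Finset.prod_mul_distrib
      _ = C (∏ b ∈ S.erase a, (-b⁻¹)) * ∏ b ∈ S.erase a, (1 - C b * X) := by rw [map_prod]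
  rw [hprod, reflect_C_mul]
  have hsplit : ∏ b ∈ S, (-b⁻¹) = (-a⁻¹) * ∏ b ∈ S.erase a, (-b⁻¹) :=
    (Finset.mul_prod_erase S _ ha).symm
  have ha0 : a ≠ 0 := hS a ha
  rw [hsplit, ← mul_assoc, ← mul_assoc, ← map_mul, ← map_mul]
  congr 1
  rw [C_inj]
  field_simp

lemma mirror_equiv {F : Type*} [Field F] [DecidableEq F] (t i : ℕ) (ht : 2 ≤ t) (S : Finset F)
    (hS : ∀ b ∈ S, b ≠ 0) (w : F → F) :
    ((X ^ t + X ^ (t - 1) + 1 : F[X]) ^ i ∣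
        ∑ a ∈ S, C (w a) * ∏ b ∈ S.erase a, (X - C b⁻¹)) ↔
    ((X ^ t + X + 1 : F[X]) ^ i ∣ ∑ a ∈ S, C (w a * a) * ∏ b ∈ S.erase a, (X - C b)) := by
  rw [sum4_eq S hS w]
  have hk : IsUnit (C (-∏ b ∈ S, (-b⁻¹)) : F[X]) := by
    rw [isUnit_C, isUnit_iff_ne_zero, neg_ne_zero]
    exact Finset.prod_ne_zero_iff.mpr fun b hbb => by
      simp only [neg_ne_zero, ne_eq, inv_eq_zero]
      exact hS b hbb
  rw [hk.dvd_mul_left]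
  refine mirror_dvd_iff t i (S.card - 1) ht _ ?_
  refine Polynomial.natDegree_sum_le_of_forall_le _ _ fun a ha => le_trans natDegree_mul_le ?_
  rw [natDegree_C, zero_add, prod_natDegree_eq, Finset.card_erase_of_mem ha]



lemma invG3 {F : Type*} [Field F] (s : ℕ) (a : F) (ha : a ≠ 0) :
    (a⁻¹) ^ (s + 1) + (a⁻¹) ^ s + 1 = (a ^ (s + 1))⁻¹ * (a ^ (s + 1) + a + 1) := by
  rw [pow_succ, inv_pow]
  field_simp
  ring

lemma invG4 {F : Type*} [Field F] (s : ℕ) (a : F) (ha : a ≠ 0) :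
    (a⁻¹) ^ (s + 1) + a⁻¹ + 1 = (a ^ (s + 1))⁻¹ * (a ^ (s + 1) + a ^ s + 1) := by
  rw [pow_succ, inv_pow]
  field_simp
  ring


/-- with `t = q^l`, `F = GF(t²)`, `L₃ = {α : α^t + α + 1 ≠ 0}`,
`L₃* = L₃ \ {0}` and `L₄* = {α : α ≠ 0 ∧ α^t + α^{t−1} + 1 ≠ 0}`, the map `α ↦ α⁻¹` is a
bijection from `L₃*` onto `L₄*`, and for `1 ≤ i ≤ q` the word `α⁻¹ ↦ c(α)` lies in
`Γ(L₄*, (X^t + X^{t−1} + 1)^i)` iff some extension of `c` by a value `c₀` at `0` lies in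
`Γ(L₃, (X^t + X + 1)^i)`; i.e. `Γ(L₄*, (X^t + X^{t−1} + 1)^i)` is, up to `α ↦ α⁻¹`, the
shortening of `Γ(L₃, (X^t + X + 1)^i)` in the redundancy symbol at position `0`. -/
theorem goppa_C3star_equiv_G4star {K F : Type*} [Field K] [Fintype K]
    [Field F] [Fintype F] [DecidableEq F] [Algebra K F]
    (q l : ℕ) (hq : Fintype.card K = q) (hl : 1 ≤ l)
    (hF : Fintype.card F = (q ^ l) ^ 2) :
    Set.BijOn (fun a => a⁻¹)
      {a : F | a ≠ 0 ∧ a ^ (q ^ l) + a + 1 ≠ 0}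
      {a : F | a ≠ 0 ∧ a ^ (q ^ l) + a ^ (q ^ l - 1) + 1 ≠ 0} ∧
    ∀ i : ℕ, 1 ≤ i → i ≤ q → ∀ c : F → K,
      (((Polynomial.X ^ (q ^ l) + Polynomial.X ^ (q ^ l - 1) + 1) ^ i ∣
          goppaSumS
            (Finset.univ.filter fun a : F => a ≠ 0 ∧ a ^ (q ^ l) + a ^ (q ^ l - 1) + 1 ≠ 0)
            (fun x => c x⁻¹)) ↔
        ∃ c₀ : K, (Polynomial.X ^ (q ^ l) + Polynomial.X + 1) ^ i ∣
          goppaSumS (Finset.univ.filter fun a : F => a ^ (q ^ l) + a + 1 ≠ 0)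
            (fun x => if x = 0 then c₀ else c x)) := by
  have hq2 : 2 ≤ q := hq ▸ Fintype.one_lt_card
  set t := q ^ l with htdef
  have ht2 : 2 ≤ t := le_trans hq2 (Nat.le_self_pow (by omega) q)
  obtain ⟨s, hs⟩ : ∃ s, t = s + 1 := ⟨t - 1, by omega⟩
  have hts : t - 1 = s := by omega
  -- characteristic facts
  set p := ringChar K with hpdef
  haveI : CharP K p := ringChar.charP K
  obtain ⟨e, hpprime, hqe⟩ := FiniteField.card K p
  haveI : Fact p.Prime := ⟨hpprime⟩
  haveI : CharP F p := charP_of_injective_algebraMap (algebraMap K F).injective p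
  have htp : t = p ^ ((e : ℕ) * l) := by
    rw [htdef, ← hq, hqe, pow_mul]
  have hKt : ∀ x : K, (algebraMap K F x) ^ t = algebraMap K F x := by
    intro x
    rw [← map_pow]
    congr 1
    have := FiniteField.pow_card_pow l x
    rwa [hq] at this
  have hFtt : ∀ a : F, a ^ (t * t) = a := by
    intro a
    have h1 := FiniteField.pow_card a
    rwa [hF, pow_two] at h1
  have hgt : ∀ a : F, (a ^ t + a + 1) ^ t = a ^ t + a + 1 := by
    intro a
    rw [htp, add_pow_char_pow, add_pow_char_pow, one_pow, ← htp, ← pow_mul, hFtt]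
    ring
  -- Part A
  have hmaps : Set.MapsTo (fun a : F => a⁻¹)
      {a : F | a ≠ 0 ∧ a ^ t + a + 1 ≠ 0}
      {a : F | a ≠ 0 ∧ a ^ t + a ^ (t - 1) + 1 ≠ 0} := by
    rintro a ⟨ha0, ha3⟩
    refine ⟨inv_ne_zero ha0, ?_⟩
    rw [hts, hs, invG3 s a ha0]
    exact mul_ne_zero (inv_ne_zero (pow_ne_zero _ ha0)) (by rw [← hs]; exact ha3)
  have hmaps' : ∀ b : F, b ≠ 0 → b ^ t + b ^ (t - 1) + 1 ≠ 0 →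
      b⁻¹ ≠ 0 ∧ (b⁻¹) ^ t + b⁻¹ + 1 ≠ 0 := by
    intro b hb0 hb4
    refine ⟨inv_ne_zero hb0, ?_⟩
    rw [hs, invG4 s b hb0]
    refine mul_ne_zero (inv_ne_zero (pow_ne_zero _ hb0)) ?_
    rw [hts, hs] at hb4
    exact hb4
  have hbij : Set.BijOn (fun a : F => a⁻¹)
      {a : F | a ≠ 0 ∧ a ^ t + a + 1 ≠ 0}
      {a : F | a ≠ 0 ∧ a ^ t + a ^ (t - 1) + 1 ≠ 0} := by
    refine ⟨hmaps, inv_injective.injOn, ?_⟩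
    rintro b ⟨hb0, hb4⟩
    obtain ⟨h1, h2⟩ := hmaps' b hb0 hb4
    exact ⟨b⁻¹, ⟨h1, h2⟩, inv_inv b⟩
  refine ⟨hbij, ?_⟩
  intro i hi1 _ c
  set S : Finset F := Finset.univ.filter (fun a : F => a ≠ 0 ∧ a ^ t + a + 1 ≠ 0) with hSdef
  set T : Finset F :=
    Finset.univ.filter (fun a : F => a ≠ 0 ∧ a ^ t + a ^ (t - 1) + 1 ≠ 0) with hTdef
  set L : Finset F := Finset.univ.filter (fun a : F => a ^ t + a + 1 ≠ 0) with hLdef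
  have hSne : ∀ b ∈ S, b ≠ 0 := fun b hb => (Finset.mem_filter.mp hb).2.1
  have hSmem : ∀ b : F, b ∈ S ↔ (b ≠ 0 ∧ b ^ t + b + 1 ≠ 0) := by
    intro b
    rw [hSdef, Finset.mem_filter]
    simp
  have hTmem : ∀ b : F, b ∈ T ↔ (b ≠ 0 ∧ b ^ t + b ^ (t - 1) + 1 ≠ 0) := by
    intro b
    rw [hTdef, Finset.mem_filter]
    simp
  have hT : T = S.image (fun a => a⁻¹) := by
    ext b
    rw [hTmem, Finset.mem_image]
    constructor
    · rintro ⟨hb0, hb4⟩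
      obtain ⟨h1, h2⟩ := hmaps' b hb0 hb4
      exact ⟨b⁻¹, (hSmem _).mpr ⟨h1, h2⟩, inv_inv b⟩
    · rintro ⟨a, haS, rfl⟩
      obtain ⟨ha0, ha3⟩ := (hSmem a).mp haS
      exact hmaps ⟨ha0, ha3⟩
  have h0S : (0 : F) ∉ S := fun h => (hSne 0 h) rfl
  have hL : L = insert (0 : F) S := by
    ext a
    rw [hLdef, Finset.mem_insert, Finset.mem_filter]
    constructor
    · rintro ⟨-, h3⟩
      by_cases ha : a = 0
      · exact Or.inl ha
      · exact Or.inr ((hSmem a).mpr ⟨ha, h3⟩)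
    · rintro (rfl | haS)
      · refine ⟨Finset.mem_univ _, ?_⟩
        rw [zero_pow (by omega : t ≠ 0), zero_add, zero_add]
        exact one_ne_zero
      · exact ⟨Finset.mem_univ _, ((hSmem a).mp haS).2⟩
  -- rewrite Sum₄
  have hinj : ∀ x ∈ S, ∀ y ∈ S, x⁻¹ = y⁻¹ → x = y := fun x _ y _ h => inv_injective h
  have hsum4 : goppaSumS T (fun x => c x⁻¹)
      = ∑ a ∈ S, C (algebraMap K F (c a)) * ∏ b ∈ S.erase a, (X - C b⁻¹) := by
    rw [goppaSumS, hT, Finset.sum_image hinj]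
    refine Finset.sum_congr rfl fun a ha => ?_
    rw [inv_inv]
    congr 1
    rw [← Finset.image_erase inv_injective S a]
    rw [Finset.prod_image (fun x hx y hy h => inv_injective h)]
  set P : F[X] := ∏ b ∈ S, (X - C b) with hPdef
  set Q : F[X] := ∑ a ∈ S, C (algebraMap K F (c a) * a) * ∏ b ∈ S.erase a, (X - C b)
    with hQdef
  have hsum3 : ∀ c₀ : K, goppaSumS L (fun x => if x = 0 then c₀ else c x)
      = C (algebraMap K F c₀ + ∑ a ∈ S, algebraMap K F (c a)) * P + Q := by
    intro c₀
    rw [goppaSumS, hL, Finset.sum_insert h0S, Finset.erase_insert h0S]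
    simp only [eq_self_iff_true, if_true]
    have hterm : ∀ a ∈ S,
        C (algebraMap K F (if a = 0 then c₀ else c a)) * ∏ b ∈ (insert 0 S).erase a, (X - C b)
        = C (algebraMap K F (c a) * a) * ∏ b ∈ S.erase a, (X - C b)
          + C (algebraMap K F (c a)) * P := by
      intro a ha
      have ha0 : a ≠ 0 := hSne a ha
      rw [if_neg ha0, Finset.erase_insert_of_ne (Ne.symm ha0),
        Finset.prod_insert (fun hmem => h0S (Finset.mem_of_mem_erase hmem))]
      have hP : P = (X - C a) * ∏ b ∈ S.erase a, (X - C b) :=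
        (Finset.mul_prod_erase S _ ha).symm
      rw [map_zero, sub_zero, hP, map_mul]
      ring
    rw [Finset.sum_congr rfl hterm, Finset.sum_add_distrib, ← Finset.sum_mul, map_add, ← hQdef,
      map_sum, ← hPdef]
    ring
  rw [hsum4, mirror_equiv t i ht2 S hSne (fun a => algebraMap K F (c a)), ← hQdef]
  constructor
  · intro hQdvd
    refine ⟨-∑ a ∈ S, c a, ?_⟩
    rw [hsum3 _]
    have he : algebraMap K F (-∑ a ∈ S, c a) + ∑ a ∈ S, algebraMap K F (c a) = 0 := by
      rw [map_neg, map_sum]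
      ring
    rw [he, map_zero, zero_mul, zero_add]
    exact hQdvd
  · rintro ⟨c₀, hdvd⟩
    have hzero := sumZero p ((e : ℕ) * l) t i htp ht2 hi1 L
      (fun x => if x = 0 then c₀ else c x) hKt
      (fun a _ => hgt a) (fun a ha => (Finset.mem_filter.mp ha).2) hdvd
    rw [hL, Finset.sum_insert h0S] at hzero
    simp only [if_pos rfl] at hzero
    have hzero' : algebraMap K F c₀ + ∑ a ∈ S, algebraMap K F (c a) = 0 := by
      rw [← hzero]
      congr 1
      refine Finset.sum_congr rfl fun a ha => ?_
      rw [if_neg (hSne a ha)]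
    rw [hsum3 c₀, hzero', map_zero, zero_mul, zero_add] at hdvd
    exact hdvd
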